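/- arXiv:0910.2147 — 9 statements merged into one kernel-verified Lean document; each statement's English description precedes it below -/
import Mathlib

section
/- Let (V₁ →d V₀, μ₀, μ₁, ν) be a 2-term representation up to homotopy of a Lie algebra 𝔤. Define on the complex V₁ →d (𝔤 ⊕ V₀) the brackets l₂(X+ξ, Y+η) = [X,Y] + μ₀(X)(η) − μ₀(Y)(ξ), l₂(X+ξ, f) = μ₁(X)(f), l₂(f,g) = 0 for f,g ∈ V₁, and l₃(X+ξ, Y+η, Z+γ) = −(ν(X,Y)(γ) + ν(Y,Z)(ξ) + ν(Z,X)(η)). Then (V₁ →d (𝔤 ⊕ V₀), l₂, l₃) is a 2-term L∞-algebra (Lie 2-algebra). -/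
/-- Semidirect product of a Lie algebra with a 2-term representation up to
homotopy is a 2-term `L∞`-algebra (Lie 2-algebra). -/
theorem semidirect_product_is_lie2algebra
    {𝔤 V₀ V₁ : Type} [LieRing 𝔤] [LieAlgebra ℝ 𝔤]
    [AddCommGroup V₀] [Module ℝ V₀] [AddCommGroup V₁] [Module ℝ V₁]
    (d : V₁ →ₗ[ℝ] V₀)
    (μ₀ : 𝔤 →ₗ[ℝ] Module.End ℝ V₀) (μ₁ : 𝔤 →ₗ[ℝ] Module.End ℝ V₁)
    (ν : 𝔤 → 𝔤 → (V₀ →ₗ[ℝ] V₁))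
    (hν_skew : ∀ X Y, ν X Y = - ν Y X)
    (hν_lin : ∀ X, IsLinearMap ℝ (ν X))
    (hcompat : ∀ X, d ∘ₗ (μ₁ X) = (μ₀ X) ∘ₗ d)
    (hμ₀ : ∀ X Y, μ₀ ⁅X, Y⁆ - (μ₀ X * μ₀ Y - μ₀ Y * μ₀ X) = d ∘ₗ (ν X Y))
    (hμ₁ : ∀ X Y, μ₁ ⁅X, Y⁆ - (μ₁ X * μ₁ Y - μ₁ Y * μ₁ X) = (ν X Y) ∘ₗ d)
    (hcoc : ∀ X₁ X₂ X₃,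
      ((μ₁ X₁) ∘ₗ (ν X₂ X₃) - (ν X₂ X₃) ∘ₗ (μ₀ X₁))
      + ((μ₁ X₂) ∘ₗ (ν X₃ X₁) - (ν X₃ X₁) ∘ₗ (μ₀ X₂))
      + ((μ₁ X₃) ∘ₗ (ν X₁ X₂) - (ν X₁ X₂) ∘ₗ (μ₀ X₃))
      = ν ⁅X₁, X₂⁆ X₃ + ν ⁅X₂, X₃⁆ X₁ + ν ⁅X₃, X₁⁆ X₂)
    -- the differential of the semidirect product complex V₁ → 𝔤 ⊕ V₀
    (D : V₁ → 𝔤 × V₀) (hD : ∀ f, D f = (0, d f))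
    -- the bracket l₂ on degree-0 elements
    (l2 : 𝔤 × V₀ → 𝔤 × V₀ → 𝔤 × V₀)
    (hl2 : ∀ x y, l2 x y = (⁅x.1, y.1⁆, μ₀ x.1 y.2 - μ₀ y.1 x.2))
    -- the bracket l₂ of a degree-0 and a degree-1 element
    (l2m : 𝔤 × V₀ → V₁ → V₁)
    (hl2m : ∀ x f, l2m x f = μ₁ x.1 f)
    -- the Jacobiator l₃
    (l3 : 𝔤 × V₀ → 𝔤 × V₀ → 𝔤 × V₀ → V₁)
    (hl3 : ∀ x y z, l3 x y z = -(ν x.1 y.1 z.2 + ν y.1 z.1 x.2 + ν z.1 x.1 y.2)) :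
    -- d is a derivation with respect to l₂
    (∀ x f, D (l2m x f) = l2 x (D f)) ∧
    -- the Jacobiator identity in degree 0
    (∀ x y z, l2 (l2 x y) z + l2 (l2 y z) x + l2 (l2 z x) y = - D (l3 x y z)) ∧
    -- the mixed Jacobi identity
    (∀ x y f, l2m (l2 x y) f - (l2m x (l2m y f) - l2m y (l2m x f))
        = - l3 x y (D f)) ∧
    -- the coherence law for l₃
    (∀ x y z w,
      l2m x (l3 y z w) - l2m y (l3 x z w) + l2m z (l3 x y w) - l2m w (l3 x y z)
      = l3 (l2 x y) z w - l3 (l2 x z) y w + l3 (l2 x w) y z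
        + l3 (l2 y z) x w - l3 (l2 y w) x z + l3 (l2 z w) x y) := by
  -- pointwise versions of the hypotheses
  have hcompat' : ∀ X f, d (μ₁ X f) = μ₀ X (d f) := fun X f =>
    LinearMap.congr_fun (hcompat X) f
  have hμ₀' : ∀ X Y v, μ₀ ⁅X, Y⁆ v =
      μ₀ X (μ₀ Y v) - μ₀ Y (μ₀ X v) + d (ν X Y v) := by
    intro X Y v
    have h2 := LinearMap.congr_fun (hμ₀ X Y) v
    simp only [LinearMap.sub_apply, LinearMap.coe_comp, Function.comp_apply,
      Module.End.mul_apply] at h2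
    exact sub_eq_iff_eq_add'.mp h2
  have hμ₁' : ∀ X Y f, μ₁ ⁅X, Y⁆ f =
      μ₁ X (μ₁ Y f) - μ₁ Y (μ₁ X f) + ν X Y (d f) := by
    intro X Y f
    have h2 := LinearMap.congr_fun (hμ₁ X Y) f
    simp only [LinearMap.sub_apply, LinearMap.coe_comp, Function.comp_apply,
      Module.End.mul_apply] at h2
    exact sub_eq_iff_eq_add'.mp h2
  have hν0 : ∀ X, ν X 0 = 0 := fun X => (hν_lin X).map_zero
  have hν0' : ∀ X, ν (0 : 𝔤) X = 0 := by
    intro X; rw [hν_skew, hν0, neg_zero]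
  have hnegbr : ∀ a b c : 𝔤, ν ⁅b, a⁆ c = -(ν ⁅a, b⁆ c) := by
    intro a b c
    rw [hν_skew ⁅b, a⁆ c, hν_skew ⁅a, b⁆ c, ← lie_skew a b,
      (hν_lin c).map_neg, neg_neg]
  have hcoc' : ∀ A B C v,
      μ₁ A (ν B C v) - ν B C (μ₀ A v)
      + (μ₁ B (ν C A v) - ν C A (μ₀ B v))
      + (μ₁ C (ν A B v) - ν A B (μ₀ C v))
      = ν ⁅A, B⁆ C v + ν ⁅B, C⁆ A v + ν ⁅C, A⁆ B v := by
    intro A B C v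
    have h2 := LinearMap.congr_fun (hcoc A B C) v
    simpa only [LinearMap.add_apply, LinearMap.sub_apply, LinearMap.coe_comp,
      Function.comp_apply] using h2
  refine ⟨?_, ?_, ?_, ?_⟩
  · -- d is a derivation
    intro x f
    rw [hl2m, hD, hl2, hD]
    simp only [Prod.mk.injEq]
    constructor
    · simp
    · simp [hcompat']
  · -- Jacobiator identity in degree 0
    rintro ⟨X, ξ⟩ ⟨Y, η⟩ ⟨Z, γ⟩
    simp only [hl2, hl3, hD]
    simp only [Prod.mk.injEq, Prod.mk_add_mk, Prod.neg_mk, neg_zero]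
    constructor
    · rw [← lie_skew ⁅X, Y⁆ Z, ← lie_skew ⁅Y, Z⁆ X, ← lie_skew ⁅Z, X⁆ Y,
        ← neg_add, ← neg_add, lie_jacobi Z X Y, neg_zero]
    · simp only [hμ₀', map_sub, map_add, map_neg]
      abel
  · -- mixed Jacobi identity
    rintro ⟨X, ξ⟩ ⟨Y, η⟩ f
    simp only [hl2m, hl2, hl3, hD]
    simp only [hν0, hν0', LinearMap.zero_apply, add_zero]
    rw [hμ₁']
    abel
  · -- coherence law
    rintro ⟨X, ξ⟩ ⟨Y, η⟩ ⟨Z, γ⟩ ⟨W, ω⟩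
    simp only [hl2m, hl2, hl3, map_add, map_neg, map_sub, neg_add_rev, neg_neg]
    rw [hν_skew W Y, hν_skew W X, hν_skew Z X, hν_skew W ⁅X, Y⁆,
      hν_skew W ⁅X, Z⁆, hν_skew Z ⁅X, W⁆, hν_skew W ⁅Y, Z⁆,
      hν_skew Z ⁅Y, W⁆, hν_skew Y ⁅Z, W⁆]
    simp only [LinearMap.neg_apply, map_neg, neg_neg]
    have c1 := hcoc' X Y Z ω
    have c2 := hcoc' Y Z W ξ
    have c3 := hcoc' X Z W η
    have c4 := hcoc' X Y W γ
    rw [hν_skew Z X, hnegbr X Z Y] at c1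
    rw [hν_skew W Y, hnegbr Y W Z] at c2
    rw [hν_skew W X, hnegbr X W Z] at c3
    rw [hν_skew W X, hnegbr X W Y] at c4
    simp only [LinearMap.neg_apply, map_neg, neg_neg] at c1 c2 c3 c4
    linear_combination (norm := abel1) c4 + c2 - c1 - c3
end

section
/- With the semidirect product brackets l₂(X+ξ, Y+η) = [X,Y] + μ₀(X)(η) − μ₀(Y)(ξ) defined from a 2-term representation up to homotopy (V₁ →d V₀, μ₀, μ₁, ν) of a Lie algebra 𝔤, the failure of the Jacobi identity on degree-0 elements is: l₂(l₂(X+ξ, Y+η), Z+γ) + c.p. = d(ν(X,Y)(γ)) + d(ν(Y,Z)(ξ)) + d(ν(Z,X)(η)). -/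
/-- The failure of the Jacobi identity for the semidirect product bracket `l₂`
on degree-0 elements is measured by `d ∘ ν`. -/
theorem semidirect_jacobi_failure
    {𝔤 V₀ V₁ : Type} [LieRing 𝔤] [LieAlgebra ℝ 𝔤]
    [AddCommGroup V₀] [Module ℝ V₀] [AddCommGroup V₁] [Module ℝ V₁]
    (d : V₁ →ₗ[ℝ] V₀)
    (μ₀ : 𝔤 →ₗ[ℝ] Module.End ℝ V₀) (μ₁ : 𝔤 →ₗ[ℝ] Module.End ℝ V₁)
    (ν : 𝔤 → 𝔤 → (V₀ →ₗ[ℝ] V₁))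
    (hν_skew : ∀ X Y, ν X Y = - ν Y X)
    (hcompat : ∀ X, d ∘ₗ (μ₁ X) = (μ₀ X) ∘ₗ d)
    (hμ₀ : ∀ X Y, μ₀ ⁅X, Y⁆ - (μ₀ X * μ₀ Y - μ₀ Y * μ₀ X) = d ∘ₗ (ν X Y))
    (hμ₁ : ∀ X Y, μ₁ ⁅X, Y⁆ - (μ₁ X * μ₁ Y - μ₁ Y * μ₁ X) = (ν X Y) ∘ₗ d)
    (hcoc : ∀ X₁ X₂ X₃,
      ((μ₁ X₁) ∘ₗ (ν X₂ X₃) - (ν X₂ X₃) ∘ₗ (μ₀ X₁))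
      + ((μ₁ X₂) ∘ₗ (ν X₃ X₁) - (ν X₃ X₁) ∘ₗ (μ₀ X₂))
      + ((μ₁ X₃) ∘ₗ (ν X₁ X₂) - (ν X₁ X₂) ∘ₗ (μ₀ X₃))
      = ν ⁅X₁, X₂⁆ X₃ + ν ⁅X₂, X₃⁆ X₁ + ν ⁅X₃, X₁⁆ X₂)
    (l2 : 𝔤 × V₀ → 𝔤 × V₀ → 𝔤 × V₀)
    (hl2 : ∀ x y, l2 x y = (⁅x.1, y.1⁆, μ₀ x.1 y.2 - μ₀ y.1 x.2)) :
    ∀ (X Y Z : 𝔤) (ξ η γ : V₀),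
      l2 (l2 (X, ξ) (Y, η)) (Z, γ) + l2 (l2 (Y, η) (Z, γ)) (X, ξ)
        + l2 (l2 (Z, γ) (X, ξ)) (Y, η)
      = (0, d (ν X Y γ) + d (ν Y Z ξ) + d (ν Z X η)) := by
  intro X Y Z ξ η γ
  have key : ∀ A B : 𝔤, ∀ v : V₀,
      μ₀ ⁅A, B⁆ v = μ₀ A (μ₀ B v) - μ₀ B (μ₀ A v) + d (ν A B v) := by
    intro A B v
    have h := congrArg (fun f => f v) (hμ₀ A B)
    simp only [LinearMap.sub_apply, Module.End.mul_apply, LinearMap.comp_apply] at h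
    linear_combination (norm := abel) h
  simp only [hl2, Prod.mk_add_mk, Prod.mk.injEq]
  constructor
  · have h := lie_jacobi X Y Z
    rw [← lie_skew ⁅X, Y⁆ Z, ← lie_skew ⁅Y, Z⁆ X, ← lie_skew ⁅Z, X⁆ Y]
    linear_combination (norm := abel) -h
  · simp only [map_sub, LinearMap.sub_apply, key]
    abel
end

section
/- Let 𝔤 be a Lie algebra, let the complex be ℝ →0 𝔤* with μ₁ = 0, μ₀ = ad* (the coadjoint representation), and ν(X,Y) ∈ Hom(𝔤*, ℝ) given by ν(X,Y)(ξ) = ξ([X,Y]). Then (ℝ →0 𝔤*, μ₀, μ₁, ν) is a 2-term representation up to homotopy of 𝔤. -/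
/-- `(ℝ →0 𝔤*, μ₀ = ad*, μ₁ = 0, ν(X,Y)(ξ) = ξ([X,Y]))` is a 2-term
representation up to homotopy of the Lie algebra `𝔤`. -/
theorem coadjoint_rep_up_to_homotopy
    {𝔤 : Type} [LieRing 𝔤] [LieAlgebra ℝ 𝔤]
    -- the coadjoint action μ₀ = ad*
    (coad : 𝔤 → Module.Dual ℝ 𝔤 → Module.Dual ℝ 𝔤)
    (hcoad : ∀ (X Y : 𝔤) (ξ : Module.Dual ℝ 𝔤), coad X ξ Y = - ξ ⁅X, Y⁆)
    -- μ₁ = 0 on V₁ = ℝ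
    (μ₁ : 𝔤 → ℝ → ℝ) (hμ₁ : ∀ X c, μ₁ X c = 0)
    -- ν : ∧²𝔤 → Hom(𝔤*, ℝ)
    (ν : 𝔤 → 𝔤 → Module.Dual ℝ 𝔤 → ℝ)
    (hν : ∀ (X Y : 𝔤) (ξ : Module.Dual ℝ 𝔤), ν X Y ξ = ξ ⁅X, Y⁆) :
    -- μ₀ = ad* is a strict representation of 𝔤 on 𝔤*
    (∀ (X Y : 𝔤) (ξ : Module.Dual ℝ 𝔤),
      coad ⁅X, Y⁆ ξ = coad X (coad Y ξ) - coad Y (coad X ξ)) ∧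
    -- μ₁ = 0 is a strict representation of 𝔤 on ℝ
    (∀ (X Y : 𝔤) (c : ℝ),
      μ₁ ⁅X, Y⁆ c = μ₁ X (μ₁ Y c) - μ₁ Y (μ₁ X c)) ∧
    -- the cocycle-type condition [μ(X₁), ν(X₂,X₃)] + c.p. = ν([X₁,X₂],X₃) + c.p.
    (∀ (X₁ X₂ X₃ : 𝔤) (ξ : Module.Dual ℝ 𝔤),
      (μ₁ X₁ (ν X₂ X₃ ξ) - ν X₂ X₃ (coad X₁ ξ))
        + (μ₁ X₂ (ν X₃ X₁ ξ) - ν X₃ X₁ (coad X₂ ξ))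
        + (μ₁ X₃ (ν X₁ X₂ ξ) - ν X₁ X₂ (coad X₃ ξ))
      = ν ⁅X₁, X₂⁆ X₃ ξ + ν ⁅X₂, X₃⁆ X₁ ξ + ν ⁅X₃, X₁⁆ X₂ ξ) := by
  refine ⟨?_, ?_, ?_⟩
  · intro X Y ξ
    apply LinearMap.ext
    intro Z
    simp only [LinearMap.sub_apply, hcoad, neg_neg, lie_lie, map_sub]
    ring
  · intro X Y c; simp [hμ₁]
  · intro X₁ X₂ X₃ ξ
    simp only [hμ₁, hν, hcoad, zero_sub, neg_neg]
    have h1 := congrArg ξ (leibniz_lie X₁ X₂ X₃)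
    have h2 := congrArg ξ (leibniz_lie X₂ X₃ X₁)
    have h3 := congrArg ξ (leibniz_lie X₃ X₁ X₂)
    simp only [map_add, ← lie_skew X₂ X₁, ← lie_skew X₃ X₂, ← lie_skew X₁ X₃,
      lie_neg, neg_lie, map_neg] at h1 h2 h3 ⊢
    have k1 : ξ ⁅⁅X₁, X₂⁆, X₃⁆ = -ξ ⁅X₃, ⁅X₁, X₂⁆⁆ := by rw [← lie_skew ⁅X₁, X₂⁆ X₃]; rw [map_neg]
    have k2 : ξ ⁅⁅X₂, X₃⁆, X₁⁆ = -ξ ⁅X₁, ⁅X₂, X₃⁆⁆ := by rw [← lie_skew ⁅X₂, X₃⁆ X₁]; rw [map_neg]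
    have k3 : ξ ⁅⁅X₃, X₁⁆, X₂⁆ = -ξ ⁅X₂, ⁅X₃, X₁⁆⁆ := by rw [← lie_skew ⁅X₃, X₁⁆ X₂]; rw [map_neg]
    linarith
end

section
/- Let G be a group and (V₁ →d V₀, F₁, F₂) a unital 2-term representation up to homotopy of G in which F₁ is a genuine (associative) action. Define the semidirect product group G ⋉ V₀ with (g₁,ξ₁)·(g₂,ξ₂) = (g₁g₂, ξ₁ + F₁(g₁)(ξ₂)), let it act on V₁ by F̃₁(g,ξ)(m) = F₁(g)(m), and define F̃₂: (G⋉V₀)³ → V₁ by F̃₂((g₁,ξ₁),(g₂,ξ₂),(g₃,ξ₃)) = F₂(g₁,g₂)(ξ₃). Then F̃₂ is a group 3-cocycle: its group-cohomology differential vanishes. -/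
/-- If `(V₁ →d V₀, F₁, F₂)` is a unital 2-term representation up to homotopy of
a group `G` in which `F₁` is a genuine (associative) action, then
`F̃₂((g₁,ξ₁),(g₂,ξ₂),(g₃,ξ₃)) = F₂(g₁,g₂)(ξ₃)` is a group 3-cocycle on the
semidirect product `G ⋉ V₀` with values in `V₁`. -/
theorem Ftilde2_is_group_three_cocycle
    {G : Type} [Group G] {V₀ V₁ : Type}
    [AddCommGroup V₀] [Module ℝ V₀] [AddCommGroup V₁] [Module ℝ V₁]
    (d : V₁ →ₗ[ℝ] V₀)
    -- the action F₁ on V₀ and V₁ is a genuine (associative, unital) action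
    (F₁₀ : G → Module.End ℝ V₀) (F₁₁ : G → Module.End ℝ V₁)
    (hF₁₀_one : F₁₀ 1 = 1) (hF₁₁_one : F₁₁ 1 = 1)
    (hF₁₀_mul : ∀ g₁ g₂, F₁₀ (g₁ * g₂) = F₁₀ g₁ * F₁₀ g₂)
    (hF₁₁_mul : ∀ g₁ g₂, F₁₁ (g₁ * g₂) = F₁₁ g₁ * F₁₁ g₂)
    (hcompat : ∀ g, d ∘ₗ (F₁₁ g) = (F₁₀ g) ∘ₗ d)
    -- F₂ and the structure equations of a representation up to homotopy
    (F₂ : G → G → (V₀ →ₗ[ℝ] V₁))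
    (hfail₀ : ∀ g₁ g₂, F₁₀ g₁ * F₁₀ g₂ - F₁₀ (g₁ * g₂) = d ∘ₗ F₂ g₁ g₂)
    (hfail₁ : ∀ g₁ g₂, F₁₁ g₁ * F₁₁ g₂ - F₁₁ (g₁ * g₂) = F₂ g₁ g₂ ∘ₗ d)
    (hclosed : ∀ g₁ g₂ g₃,
      (F₁₁ g₁) ∘ₗ F₂ g₂ g₃ - F₂ (g₁ * g₂) g₃ + F₂ g₁ (g₂ * g₃)
        - F₂ g₁ g₂ ∘ₗ (F₁₀ g₃) = 0)
    -- the semidirect product group G ⋉ V₀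
    (m : G × V₀ → G × V₀ → G × V₀)
    (hm : ∀ (g₁ g₂ : G) (ξ₁ ξ₂ : V₀),
      m (g₁, ξ₁) (g₂, ξ₂) = (g₁ * g₂, ξ₁ + F₁₀ g₁ ξ₂))
    -- the 3-cochain F̃₂ on G ⋉ V₀ with values in V₁
    (F₂' : G × V₀ → G × V₀ → G × V₀ → V₁)
    (hF₂' : ∀ x₁ x₂ x₃ : G × V₀, F₂' x₁ x₂ x₃ = F₂ x₁.1 x₂.1 x₃.2) :
    -- the group-cohomology differential of F̃₂ vanishes
    ∀ x₁ x₂ x₃ x₄ : G × V₀,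
      F₁₁ x₁.1 (F₂' x₂ x₃ x₄) - F₂' (m x₁ x₂) x₃ x₄ + F₂' x₁ (m x₂ x₃) x₄
        - F₂' x₁ x₂ (m x₃ x₄) + F₂' x₁ x₂ x₃ = 0 := by
  rintro ⟨g₁, ξ₁⟩ ⟨g₂, ξ₂⟩ ⟨g₃, ξ₃⟩ ⟨g₄, ξ₄⟩
  have h := congrFun (congrArg DFunLike.coe (hclosed g₁ g₂ g₃)) ξ₄
  simp only [LinearMap.sub_apply, LinearMap.add_apply, LinearMap.comp_apply,
    LinearMap.zero_apply] at h
  simp only [hF₂', hm, map_add]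
  abel_nf
  abel_nf at h
  linear_combination (norm := abel) h
end

section
/- Let G be a group, V₀, V₁ modules with G acting through a homomorphism F₁, and suppose the 2-cocycle F̄₂: G² → Hom(V₀,V₁) is exact: F̄₂(g₁,g₂) = F₁(g₁)α(g₂)F₁(g₁)⁻¹ − α(g₁g₂) + α(g₁) for some α: G → Hom(V₀,V₁). Define F₂(g₁,g₂) = F̄₂(g₁,g₂)∘F₁(g₁g₂) and the 3-cochain F̃₂ on G ⋉ V₀ by F̃₂((g₁,ξ₁),(g₂,ξ₂),(g₃,ξ₃)) = F₂(g₁,g₂)(ξ₃). Then F̃₂ is an exact group 3-cocycle: F̃₂ = dβ where β((g₁,ξ₁),(g₂,ξ₂)) = α(g₁)(F₁(g₁)(ξ₂)). -/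
/-- If the 2-cocycle `F̄₂` is exact, `F̄₂ = dα`, then the associated 3-cochain
`F̃₂` on `G ⋉ V₀` is an exact group 3-cocycle: `F̃₂ = dβ` with
`β((g₁,ξ₁),(g₂,ξ₂)) = α(g₁)(F₁(g₁)(ξ₂))`. -/
theorem Ftilde2_exact_of_F2bar_exact
    {G : Type} [Group G] {V₀ V₁ : Type}
    [AddCommGroup V₀] [Module ℝ V₀] [AddCommGroup V₁] [Module ℝ V₁]
    -- the genuine actions F₁ on V₀ and V₁
    (F₁₀ : G → Module.End ℝ V₀) (F₁₁ : G → Module.End ℝ V₁)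
    (hF₁₀_one : F₁₀ 1 = 1) (hF₁₁_one : F₁₁ 1 = 1)
    (hF₁₀_mul : ∀ g₁ g₂, F₁₀ (g₁ * g₂) = F₁₀ g₁ * F₁₀ g₂)
    (hF₁₁_mul : ∀ g₁ g₂, F₁₁ (g₁ * g₂) = F₁₁ g₁ * F₁₁ g₂)
    -- F̄₂ is exact: F̄₂ = dα
    (α : G → (V₀ →ₗ[ℝ] V₁))
    (F₂bar : G → G → (V₀ →ₗ[ℝ] V₁))
    (hexact : ∀ g₁ g₂, F₂bar g₁ g₂
      = (F₁₁ g₁) ∘ₗ (α g₂) ∘ₗ (F₁₀ g₁⁻¹) - α (g₁ * g₂) + α g₁)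
    -- F₂ and the 3-cochain F̃₂ on the semidirect product G ⋉ V₀
    (F₂ : G → G → (V₀ →ₗ[ℝ] V₁))
    (hF₂ : ∀ g₁ g₂, F₂ g₁ g₂ = (F₂bar g₁ g₂) ∘ₗ (F₁₀ (g₁ * g₂)))
    (m : G × V₀ → G × V₀ → G × V₀)
    (hm : ∀ (g₁ g₂ : G) (ξ₁ ξ₂ : V₀),
      m (g₁, ξ₁) (g₂, ξ₂) = (g₁ * g₂, ξ₁ + F₁₀ g₁ ξ₂))
    (F₂' : G × V₀ → G × V₀ → G × V₀ → V₁)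
    (hF₂' : ∀ x₁ x₂ x₃ : G × V₀, F₂' x₁ x₂ x₃ = F₂ x₁.1 x₂.1 x₃.2)
    -- the 2-cochain β
    (β : G × V₀ → G × V₀ → V₁)
    (hβ : ∀ x₁ x₂ : G × V₀, β x₁ x₂ = α x₁.1 (F₁₀ x₁.1 x₂.2)) :
    -- F̃₂ = dβ
    ∀ x₁ x₂ x₃ : G × V₀,
      F₂' x₁ x₂ x₃
        = F₁₁ x₁.1 (β x₂ x₃) - β (m x₁ x₂) x₃ + β x₁ (m x₂ x₃) - β x₁ x₂ := by
  rintro ⟨g₁, ξ₁⟩ ⟨g₂, ξ₂⟩ ⟨g₃, ξ₃⟩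
  have hinv : ∀ v : V₀, F₁₀ g₁⁻¹ (F₁₀ (g₁ * g₂) v) = F₁₀ g₂ v := by
    intro v
    have : F₁₀ g₁⁻¹ * F₁₀ (g₁ * g₂) = F₁₀ g₂ := by
      rw [← hF₁₀_mul, inv_mul_cancel_left]
    calc F₁₀ g₁⁻¹ (F₁₀ (g₁ * g₂) v) = (F₁₀ g₁⁻¹ * F₁₀ (g₁ * g₂)) v := rfl
      _ = F₁₀ g₂ v := by rw [this]
  simp only [hF₂', hF₂, hβ, hm, hexact, LinearMap.comp_apply, LinearMap.add_apply,
    LinearMap.sub_apply, map_add, hinv]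
  have hmul : ∀ v : V₀, F₁₀ (g₁ * g₂) v = F₁₀ g₁ (F₁₀ g₂ v) := by
    intro v; rw [hF₁₀_mul]; rfl
  rw [hmul]
  abel
end

section
/- Let 𝔤 be a Lie algebra, V₀ and V₁ vector spaces with Lie algebra representations μ₀: 𝔤 → End(V₀), μ₁: 𝔤 → End(V₁), and let ν: ∧²𝔤 → Hom(V₀,V₁) satisfy [μ(X₁), ν(X₂,X₃)] + c.p. = ν([X₁,X₂],X₃) + c.p. (where [μ(X), A] = μ₁(X)∘A − A∘μ₀(X)). Define ν̃: ∧³(𝔤 ⊕ V₀) → V₁ by ν̃(X₁+ξ₁, X₂+ξ₂, X₃+ξ₃) = ν(X₁,X₂)(ξ₃) + ν(X₂,X₃)(ξ₁) + ν(X₃,X₁)(ξ₂). Then ν is a Lie algebra 2-cocycle of 𝔤 with values in Hom(V₀,V₁) if and only if ν̃ is a Lie algebra 3-cocycle of the semidirect product Lie algebra 𝔤 ⋉ V₀ with values in V₁ (acting via μ̃(X+ξ) = μ₁(X)). -/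
/-- `ν` is a Lie algebra 2-cocycle of `𝔤` with values in `Hom(V₀,V₁)` if and
only if `ν̃(X₁+ξ₁,X₂+ξ₂,X₃+ξ₃) = ν(X₁,X₂)(ξ₃) + ν(X₂,X₃)(ξ₁) + ν(X₃,X₁)(ξ₂)`
is a Lie algebra 3-cocycle of the semidirect product `𝔤 ⋉ V₀` with values in
`V₁` (acting via `μ̃(X+ξ) = μ₁(X)`). -/
theorem nu_two_cocycle_iff_nu_tilde_three_cocycle
    {𝔤 V₀ V₁ : Type} [LieRing 𝔤] [LieAlgebra ℝ 𝔤]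
    [AddCommGroup V₀] [Module ℝ V₀] [AddCommGroup V₁] [Module ℝ V₁]
    -- μ₀ and μ₁ are Lie algebra representations
    (μ₀ : 𝔤 →ₗ[ℝ] Module.End ℝ V₀) (μ₁ : 𝔤 →ₗ[ℝ] Module.End ℝ V₁)
    (hμ₀ : ∀ X Y, μ₀ ⁅X, Y⁆ = μ₀ X * μ₀ Y - μ₀ Y * μ₀ X)
    (hμ₁ : ∀ X Y, μ₁ ⁅X, Y⁆ = μ₁ X * μ₁ Y - μ₁ Y * μ₁ X)
    -- ν and the compatibility identity
    (ν : 𝔤 → 𝔤 → (V₀ →ₗ[ℝ] V₁))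
    (hν_skew : ∀ X Y, ν X Y = - ν Y X)
    (hcompat : ∀ X₁ X₂ X₃,
      ((μ₁ X₁) ∘ₗ (ν X₂ X₃) - (ν X₂ X₃) ∘ₗ (μ₀ X₁))
      + ((μ₁ X₂) ∘ₗ (ν X₃ X₁) - (ν X₃ X₁) ∘ₗ (μ₀ X₂))
      + ((μ₁ X₃) ∘ₗ (ν X₁ X₂) - (ν X₁ X₂) ∘ₗ (μ₀ X₃))
      = ν ⁅X₁, X₂⁆ X₃ + ν ⁅X₂, X₃⁆ X₁ + ν ⁅X₃, X₁⁆ X₂)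
    -- the semidirect product Lie algebra 𝔤 ⋉ V₀
    (br : 𝔤 × V₀ → 𝔤 × V₀ → 𝔤 × V₀)
    (hbr : ∀ x y : 𝔤 × V₀, br x y = (⁅x.1, y.1⁆, μ₀ x.1 y.2 - μ₀ y.1 x.2))
    -- the 3-cochain ν̃ on 𝔤 ⋉ V₀ with values in V₁
    (ν' : 𝔤 × V₀ → 𝔤 × V₀ → 𝔤 × V₀ → V₁)
    (hν' : ∀ x y z : 𝔤 × V₀,
      ν' x y z = ν x.1 y.1 z.2 + ν y.1 z.1 x.2 + ν z.1 x.1 y.2) :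
    -- ν is a 2-cocycle  ↔  ν̃ is a 3-cocycle
    (∀ X₁ X₂ X₃ : 𝔤,
      ((μ₁ X₁) ∘ₗ (ν X₂ X₃) - (ν X₂ X₃) ∘ₗ (μ₀ X₁))
        - ((μ₁ X₂) ∘ₗ (ν X₁ X₃) - (ν X₁ X₃) ∘ₗ (μ₀ X₂))
        + ((μ₁ X₃) ∘ₗ (ν X₁ X₂) - (ν X₁ X₂) ∘ₗ (μ₀ X₃))
        - ν ⁅X₁, X₂⁆ X₃ + ν ⁅X₁, X₃⁆ X₂ - ν ⁅X₂, X₃⁆ X₁ = 0)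
    ↔
    (∀ a₁ a₂ a₃ a₄ : 𝔤 × V₀,
      μ₁ a₁.1 (ν' a₂ a₃ a₄) - μ₁ a₂.1 (ν' a₁ a₃ a₄)
        + μ₁ a₃.1 (ν' a₁ a₂ a₄) - μ₁ a₄.1 (ν' a₁ a₂ a₃)
        - ν' (br a₁ a₂) a₃ a₄ + ν' (br a₁ a₃) a₂ a₄ - ν' (br a₁ a₄) a₂ a₃
        - ν' (br a₂ a₃) a₁ a₄ + ν' (br a₂ a₄) a₁ a₃ - ν' (br a₃ a₄) a₁ a₂
        = 0) := by
  have hνv : ∀ (X Y : 𝔤) (v : V₀), ν X Y v = -(ν Y X v) := by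
    intro X Y v; rw [hν_skew X Y]; simp
  constructor
  · intro h a₁ a₂ a₃ a₄
    obtain ⟨X₁, ξ₁⟩ := a₁
    obtain ⟨X₂, ξ₂⟩ := a₂
    obtain ⟨X₃, ξ₃⟩ := a₃
    obtain ⟨X₄, ξ₄⟩ := a₄
    have e₁ := LinearMap.congr_fun (h X₂ X₃ X₄) ξ₁
    have e₂ := LinearMap.congr_fun (h X₁ X₃ X₄) ξ₂
    have e₃ := LinearMap.congr_fun (h X₁ X₂ X₄) ξ₃
    have e₄ := LinearMap.congr_fun (h X₁ X₂ X₃) ξ₄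
    simp only [LinearMap.sub_apply, LinearMap.add_apply, LinearMap.comp_apply,
      LinearMap.zero_apply] at e₁ e₂ e₃ e₄
    simp only [hν', hbr, map_add, map_sub,
      hνv X₄ X₂, hνv X₄ X₁, hνv X₃ X₁, hνv X₄ ⁅X₁, X₂⁆, hνv X₄ ⁅X₁, X₃⁆,
      hνv X₃ ⁅X₁, X₄⁆, hνv X₄ ⁅X₂, X₃⁆, hνv X₃ ⁅X₂, X₄⁆, hνv X₂ ⁅X₃, X₄⁆,
      map_neg]
    linear_combination (norm := module) e₄ - e₃ + e₂ - e₁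
  · intro h X₁ X₂ X₃
    ext ξ
    have H := h (X₁, 0) (X₂, 0) (X₃, 0) (0, ξ)
    simp only [hν', hbr, map_zero, map_sub, sub_zero, zero_sub, add_zero, zero_add,
      sub_self, neg_zero] at H
    simp only [LinearMap.sub_apply, LinearMap.add_apply, LinearMap.comp_apply,
      LinearMap.zero_apply]
    linear_combination (norm := module) H
end

section
/- Let G be a group and (V₁ →d V₀, F₁, F₂) a unital 2-term representation up to homotopy of G. On the set G × V₀ × V₁ define horizontal multiplication (g₁,ξ,m)·(g₂,η,n) = (g₁g₂, ξ + F₁(g₁)η, m + F₁(g₁)n) and associator a_{(g₁,ξ),(g₂,η),(g₃,γ)} = (g₁g₂g₃, ξ + F₁(g₁)η + F₁(g₁g₂)γ, F₂(g₁,g₂)(γ)). Then the pentagon identity holds: a_{(g₁,ξ),(g₂,η),(g₃,γ)·(g₄,θ)} · a_{(g₁,ξ)·(g₂,η),(g₃,γ),(g₄,θ)} = ((g₁,ξ) · a_{(g₂,η),(g₃,γ),(g₄,θ)}) · a_{(g₁,ξ),(g₂,η)·(g₃,γ),(g₄,θ)} · (a_{(g₁,ξ),(g₂,η),(g₃,γ)}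 · (g₄,θ)). -/
/-- For the semidirect product Lie 2-group of a group `G` with a unital 2-term
representation up to homotopy, the pentagon identity for the associator holds. -/
theorem semidirect_two_group_pentagon
    {G : Type} [Group G] {V₀ V₁ : Type}
    [AddCommGroup V₀] [Module ℝ V₀] [AddCommGroup V₁] [Module ℝ V₁]
    (d : V₁ →ₗ[ℝ] V₀)
    (F₁₀ : G → Module.End ℝ V₀) (F₁₁ : G → Module.End ℝ V₁)
    (hF₁₀_one : F₁₀ 1 = 1) (hF₁₁_one : F₁₁ 1 = 1)
    (hcompat : ∀ g, d ∘ₗ (F₁₁ g) = (F₁₀ g) ∘ₗ d)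
    (F₂ : G → G → (V₀ →ₗ[ℝ] V₁))
    (hfail₀ : ∀ g₁ g₂, F₁₀ g₁ * F₁₀ g₂ - F₁₀ (g₁ * g₂) = d ∘ₗ F₂ g₁ g₂)
    (hfail₁ : ∀ g₁ g₂, F₁₁ g₁ * F₁₁ g₂ - F₁₁ (g₁ * g₂) = F₂ g₁ g₂ ∘ₗ d)
    (hclosed : ∀ g₁ g₂ g₃,
      (F₁₁ g₁) ∘ₗ F₂ g₂ g₃ - F₂ (g₁ * g₂) g₃ + F₂ g₁ (g₂ * g₃)
        - F₂ g₁ g₂ ∘ₗ (F₁₀ g₃) = 0)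
    -- horizontal multiplication of objects
    (mo : G × V₀ → G × V₀ → G × V₀)
    (hmo : ∀ x y : G × V₀, mo x y = (x.1 * y.1, x.2 + F₁₀ x.1 y.2))
    -- horizontal multiplication of morphisms
    (mh : G × V₀ × V₁ → G × V₀ × V₁ → G × V₀ × V₁)
    (hmh : ∀ a b : G × V₀ × V₁,
      mh a b = (a.1 * b.1, a.2.1 + F₁₀ a.1 b.2.1, a.2.2 + F₁₁ a.1 b.2.2))
    -- vertical composition of morphisms: `v a b` is `a` after `b`
    (v : G × V₀ × V₁ → G × V₀ × V₁ → G × V₀ × V₁)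
    (hv : ∀ a b : G × V₀ × V₁, v a b = (b.1, b.2.1, b.2.2 + a.2.2))
    -- the associator
    (assoc : G × V₀ → G × V₀ → G × V₀ → G × V₀ × V₁)
    (hassoc : ∀ x y z : G × V₀,
      assoc x y z = (x.1 * y.1 * z.1,
        x.2 + F₁₀ x.1 y.2 + F₁₀ (x.1 * y.1) z.2, F₂ x.1 y.1 z.2)) :
    -- the pentagon identity
    ∀ x y z w : G × V₀,
      v (assoc x y (mo z w)) (assoc (mo x y) z w)
      = v (mh (x.1, x.2, (0 : V₁)) (assoc y z w))
          (v (assoc x (mo y z) w) (mh (assoc x y z) (w.1, w.2, (0 : V₁)))) := by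
  intro x y z w
  have key := hclosed x.1 y.1 z.1
  have key' := congrArg (fun f : V₀ →ₗ[ℝ] V₁ => f w.2) key
  simp only [LinearMap.sub_apply, LinearMap.add_apply, LinearMap.comp_apply,
    LinearMap.zero_apply] at key'
  simp only [hmo, hmh, hv, hassoc, Prod.mk.injEq, map_add, map_zero, add_zero]
  refine ⟨by group, trivial, ?_⟩
  have : F₁₁ x.1 (F₂ y.1 z.1 w.2) = F₂ (x.1 * y.1) z.1 w.2
      - F₂ x.1 (y.1 * z.1) w.2 + F₂ x.1 y.1 (F₁₀ z.1 w.2) := by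
    rw [← sub_eq_zero]; abel_nf; abel_nf at key'; exact key'
  rw [this]; abel
end

section
/- Let G be a group and (V₁ →d V₀, F₁, F₂) a unital 2-term representation up to homotopy of G. The associator a_{(g₁,ξ),(g₂,η),(g₃,γ)} = (g₁g₂g₃, ξ + F₁(g₁)η + F₁(g₁g₂)γ, F₂(g₁,g₂)(γ)) is natural: for all morphisms (gᵢ, ξᵢ, mᵢ), composing a at the shifted objects with the product of the morphisms (associating to the left) equals the product associating to the right composed with a at the original objects; concretely, m + F₁(g₁)(n) + F₁(g₁g₂)(k) + F₂(g₁,g₂)(γ + dk) = m + F₁(g₁)(n) + F₁(g₁)F₁(g₂)(k) + F₂(g₁,g₂)(γ). -/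
/-- Naturality of the associator of the semidirect product Lie 2-group:
composing the associator at the shifted objects with the left-associated
product of morphisms equals the right-associated product composed with the
associator at the original objects; concretely,
`m + F₁(g₁)n + F₁(g₁g₂)k + F₂(g₁,g₂)(γ + dk)
  = m + F₁(g₁)n + F₁(g₁)F₁(g₂)k + F₂(g₁,g₂)(γ)`. -/
theorem semidirect_two_group_associator_natural
    {G : Type} [Group G] {V₀ V₁ : Type}
    [AddCommGroup V₀] [Module ℝ V₀] [AddCommGroup V₁] [Module ℝ V₁]
    (d : V₁ →ₗ[ℝ] V₀)
    (F₁₀ : G → Module.End ℝ V₀) (F₁₁ : G → Module.End ℝ V₁)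
    (hF₁₀_one : F₁₀ 1 = 1) (hF₁₁_one : F₁₁ 1 = 1)
    (hcompat : ∀ g, d ∘ₗ (F₁₁ g) = (F₁₀ g) ∘ₗ d)
    (F₂ : G → G → (V₀ →ₗ[ℝ] V₁))
    (hfail₀ : ∀ g₁ g₂, F₁₀ g₁ * F₁₀ g₂ - F₁₀ (g₁ * g₂) = d ∘ₗ F₂ g₁ g₂)
    (hfail₁ : ∀ g₁ g₂, F₁₁ g₁ * F₁₁ g₂ - F₁₁ (g₁ * g₂) = F₂ g₁ g₂ ∘ₗ d)
    (hclosed : ∀ g₁ g₂ g₃,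
      (F₁₁ g₁) ∘ₗ F₂ g₂ g₃ - F₂ (g₁ * g₂) g₃ + F₂ g₁ (g₂ * g₃)
        - F₂ g₁ g₂ ∘ₗ (F₁₀ g₃) = 0)
    (mh : G × V₀ × V₁ → G × V₀ × V₁ → G × V₀ × V₁)
    (hmh : ∀ a b : G × V₀ × V₁,
      mh a b = (a.1 * b.1, a.2.1 + F₁₀ a.1 b.2.1, a.2.2 + F₁₁ a.1 b.2.2))
    (v : G × V₀ × V₁ → G × V₀ × V₁ → G × V₀ × V₁)
    (hv : ∀ a b : G × V₀ × V₁, v a b = (b.1, b.2.1, b.2.2 + a.2.2))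
    (assoc : G × V₀ → G × V₀ → G × V₀ → G × V₀ × V₁)
    (hassoc : ∀ x y z : G × V₀,
      assoc x y z = (x.1 * y.1 * z.1,
        x.2 + F₁₀ x.1 y.2 + F₁₀ (x.1 * y.1) z.2, F₂ x.1 y.1 z.2)) :
    -- naturality of the associator
    (∀ (g₁ g₂ g₃ : G) (ξ η γ : V₀) (m n k : V₁),
      v (assoc (g₁, ξ + d m) (g₂, η + d n) (g₃, γ + d k))
          (mh (mh (g₁, ξ, m) (g₂, η, n)) (g₃, γ, k))
      = v (mh (g₁, ξ, m) (mh (g₂, η, n) (g₃, γ, k)))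
          (assoc (g₁, ξ) (g₂, η) (g₃, γ))) ∧
    -- concretely, in the V₁ component:
    (∀ (g₁ g₂ : G) (γ : V₀) (m n k : V₁),
      m + F₁₁ g₁ n + F₁₁ (g₁ * g₂) k + F₂ g₁ g₂ (γ + d k)
        = m + F₁₁ g₁ n + F₁₁ g₁ (F₁₁ g₂ k) + F₂ g₁ g₂ γ) := by
  have key : ∀ (g₁ g₂ : G) (k : V₁),
      F₂ g₁ g₂ (d k) = F₁₁ g₁ (F₁₁ g₂ k) - F₁₁ (g₁ * g₂) k := by
    intro g₁ g₂ k
    have := congrArg (fun f : V₁ →ₗ[ℝ] V₁ => f k) (hfail₁ g₁ g₂)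
    simpa [LinearMap.sub_apply, Module.End.mul_apply] using this.symm
  have h2 : ∀ (g₁ g₂ : G) (γ : V₀) (m n k : V₁),
      m + F₁₁ g₁ n + F₁₁ (g₁ * g₂) k + F₂ g₁ g₂ (γ + d k)
        = m + F₁₁ g₁ n + F₁₁ g₁ (F₁₁ g₂ k) + F₂ g₁ g₂ γ := by
    intro g₁ g₂ γ m n k
    rw [map_add, key]
    abel
  refine ⟨?_, h2⟩
  intro g₁ g₂ g₃ ξ η γ m n k
  simp only [hv, hmh, hassoc, map_add]
  refine Prod.ext rfl (Prod.ext rfl ?_)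
  simp only []
  have := h2 g₁ g₂ γ m n k
  rw [map_add] at this
  linear_combination (norm := abel) this
end

section
/- Let G be a group and (V₁ →d V₀, F₁, F₂) a unital 2-term representation up to homotopy of G with F₂(g, g⁻¹) defined for all g. Then the unit morphism i_{(g,ξ)} = (1_G, 0, −F₂(g,g⁻¹)(ξ)) is a morphism from (1_G, 0) to (g,ξ)·inv(g,ξ) where inv(g,ξ) = (g⁻¹, −F₁(g⁻¹)(ξ)), and naturality holds: for any morphism (g,ξ,m), ((g,ξ,m)·inv(g,ξ,m))·i_{(g,ξ)} = i_{(g,ξ+dm)}; concretely F₂(g,g⁻¹)(dm) = F₁(g)F₁(g⁻¹)(m) − m. -/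
/-- The unit `i_{(g,ξ)} = (1_G, 0, −F₂(g,g⁻¹)(ξ))` of the semidirect product
Lie 2-group is a morphism from `(1_G, 0)` to `(g,ξ)·inv(g,ξ)`, and it is
natural: concretely `F₂(g,g⁻¹)(dm) = F₁(g)F₁(g⁻¹)(m) − m`. -/
theorem semidirect_two_group_unit_natural
    {G : Type} [Group G] {V₀ V₁ : Type}
    [AddCommGroup V₀] [Module ℝ V₀] [AddCommGroup V₁] [Module ℝ V₁]
    (d : V₁ →ₗ[ℝ] V₀)
    (F₁₀ : G → Module.End ℝ V₀) (F₁₁ : G → Module.End ℝ V₁)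
    (hF₁₀_one : F₁₀ 1 = 1) (hF₁₁_one : F₁₁ 1 = 1)
    (hcompat : ∀ g, d ∘ₗ (F₁₁ g) = (F₁₀ g) ∘ₗ d)
    (F₂ : G → G → (V₀ →ₗ[ℝ] V₁))
    (hfail₀ : ∀ g₁ g₂, F₁₀ g₁ * F₁₀ g₂ - F₁₀ (g₁ * g₂) = d ∘ₗ F₂ g₁ g₂)
    (hfail₁ : ∀ g₁ g₂, F₁₁ g₁ * F₁₁ g₂ - F₁₁ (g₁ * g₂) = F₂ g₁ g₂ ∘ₗ d)
    (hclosed : ∀ g₁ g₂ g₃,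
      (F₁₁ g₁) ∘ₗ F₂ g₂ g₃ - F₂ (g₁ * g₂) g₃ + F₂ g₁ (g₂ * g₃)
        - F₂ g₁ g₂ ∘ₗ (F₁₀ g₃) = 0) :
    -- the unit i_{(g,ξ)} = (1_G, 0, −F₂(g,g⁻¹)(ξ)) is a morphism from
    -- (1_G, 0) to (g,ξ)·ₕ inv(g,ξ) = (g·g⁻¹, ξ + F₁(g)(−F₁(g⁻¹)(ξ)))
    (∀ (g : G) (ξ : V₀),
      ((1 : G), (0 : V₀) + d (-(F₂ g g⁻¹ ξ)))
        = (g * g⁻¹, ξ + F₁₀ g (-(F₁₀ g⁻¹ ξ)))) ∧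
    -- naturality of the unit, concretely:
    (∀ (g : G) (m : V₁),
      F₂ g g⁻¹ (d m) = F₁₁ g (F₁₁ g⁻¹ m) - m) := by
  constructor
  · intro g ξ
    have h := congrArg (fun f => f ξ) (hfail₀ g g⁻¹)
    simp [hF₁₀_one] at h
    refine Prod.ext (by simp) ?_
    simp only [map_neg]
    rw [← h]; abel
  · intro g m
    have h := congrArg (fun f => f m) (hfail₁ g g⁻¹)
    simp [hF₁₁_one] at h
    rw [← h]
end
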